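/- Let q > 1 be a real number, let α₁, α₂ ∈ ℂ satisfy |α₁ α₂| = 1 and |α₁| < q^{1/2}, |α₂| < q^{1/2}, and let s ∈ ℂ with Re(s) ≥ 0. For m ≥ 0 set A_m = ∑_{j=0}^{m} α₁^{j} α₂^{m−j}. Then the series ∑_{m=0}^{∞} A_{m+2} · conj(A_m) · q^{−m(s+1)} converges absolutely and ( ∏_{i ∈ {1,2}} ∏_{j ∈ {1,2}} (1 − α_i · conj(α_j) · q^{−(s+1)}) ) · ∑_{m=0}^{∞} A_{m+2} · conj(A_m) · q^{−m(s+1)} = (α₁ + α₂)² − α₁α₂ − α₁α₂ · |α₁ + α₂|² · q^{−(s+1)} + α₁α₂ · q^{−2(s+1)}. -/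

import Mathlib

open Complex

/-- The normalized spherical Whittaker value `A_m = ∑_{j=0}^{m} α₁^j α₂^{m-j}`. -/
noncomputable def Asph (α₁ α₂ : ℂ) (m : ℕ) : ℂ :=
  ∑ j ∈ Finset.range (m + 1), α₁ ^ j * α₂ ^ (m - j)

lemma Asph_succ_left (α₁ α₂ : ℂ) (m : ℕ) :
    Asph α₁ α₂ (m + 1) = α₁ * Asph α₁ α₂ m + α₂ ^ (m + 1) := by
  unfold Asph
  rw [Finset.sum_range_succ']
  simp only [pow_zero, one_mul, Nat.sub_zero, Finset.mul_sum]
  congr 1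
  refine Finset.sum_congr rfl fun j hj => ?_
  rw [show m + 1 - (j + 1) = m - j from by omega, pow_succ]
  ring

lemma Asph_rec (α₁ α₂ : ℂ) (m : ℕ) :
    Asph α₁ α₂ (m + 2) = (α₁ + α₂) * Asph α₁ α₂ (m + 1) - α₁ * α₂ * Asph α₁ α₂ m := by
  have h1 := Asph_succ_left α₁ α₂ (m + 1)
  have h2 := Asph_succ_left α₁ α₂ m
  rw [show m + 1 + 1 = m + 2 from rfl] at h1
  linear_combination h1 - α₂ * h2

lemma Asph_norm_le (α₁ α₂ : ℂ) (m : ℕ) (M : ℝ) (h1 : ‖α₁‖ ≤ M) (h2 : ‖α₂‖ ≤ M) :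
    ‖Asph α₁ α₂ m‖ ≤ ((m : ℝ) + 1) * M ^ m := by
  have hM : 0 ≤ M := le_trans (norm_nonneg _) h1
  calc ‖Asph α₁ α₂ m‖ ≤ ∑ j ∈ Finset.range (m + 1), ‖α₁ ^ j * α₂ ^ (m - j)‖ :=
        norm_sum_le _ _
    _ ≤ ∑ j ∈ Finset.range (m + 1), M ^ m := by
        refine Finset.sum_le_sum fun j hj => ?_
        have hj' : j ≤ m := Nat.lt_succ_iff.mp (Finset.mem_range.mp hj)
        rw [norm_mul, norm_pow, norm_pow]
        calc ‖α₁‖ ^ j * ‖α₂‖ ^ (m - j) ≤ M ^ j * M ^ (m - j) := by gcongr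
          _ = M ^ m := by rw [← pow_add]; congr 1; omega
    _ = ((m : ℝ) + 1) * M ^ m := by
        rw [Finset.sum_const, Finset.card_range, nsmul_eq_mul]; push_cast; ring

theorem stmt18 (q : ℝ) (hq : 1 < q) (α₁ α₂ : ℂ)
    (hmul : ‖α₁ * α₂‖ = 1)
    (h1 : ‖α₁‖ < Real.sqrt q) (h2 : ‖α₂‖ < Real.sqrt q)
    (s : ℂ) (hs : 0 ≤ s.re) :
    Summable (fun m : ℕ =>
      ‖Asph α₁ α₂ (m + 2) * (starRingEnd ℂ) (Asph α₁ α₂ m) *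
        (q : ℂ) ^ (-(m : ℂ) * (s + 1))‖) ∧
    ((1 - α₁ * (starRingEnd ℂ) α₁ * (q : ℂ) ^ (-(s + 1))) *
          (1 - α₁ * (starRingEnd ℂ) α₂ * (q : ℂ) ^ (-(s + 1))) *
          (1 - α₂ * (starRingEnd ℂ) α₁ * (q : ℂ) ^ (-(s + 1))) *
          (1 - α₂ * (starRingEnd ℂ) α₂ * (q : ℂ) ^ (-(s + 1)))) *
        (∑' m : ℕ, Asph α₁ α₂ (m + 2) * (starRingEnd ℂ) (Asph α₁ α₂ m) *
          (q : ℂ) ^ (-(m : ℂ) * (s + 1)))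
      = (α₁ + α₂) ^ 2 - α₁ * α₂ -
          α₁ * α₂ * ((α₁ + α₂) * (starRingEnd ℂ) (α₁ + α₂)) * (q : ℂ) ^ (-(s + 1)) +
          α₁ * α₂ * (q : ℂ) ^ (-2 * (s + 1)) := by
  have hq0 : (0 : ℝ) < q := lt_trans one_pos hq
  set t : ℂ := (q : ℂ) ^ (-(s + 1)) with ht
  -- rewrite cpow's as powers of t
  have hcp : ∀ m : ℕ, (q : ℂ) ^ (-(m : ℂ) * (s + 1)) = t ^ m := by
    intro m
    rw [show -(m : ℂ) * (s + 1) = (m : ℕ) * (-(s + 1)) by push_cast; ring,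
      Complex.cpow_nat_mul]
  have hcp2 : (q : ℂ) ^ (-2 * (s + 1)) = t ^ 2 := by
    rw [show (-2 : ℂ) * (s + 1) = ((2 : ℕ) : ℂ) * (-(s + 1)) by push_cast; ring,
      Complex.cpow_nat_mul]
  -- norm of t
  have htnorm : ‖t‖ ≤ q⁻¹ := by
    rw [ht, Complex.norm_cpow_eq_rpow_re_of_pos hq0]
    calc q ^ (-(s + 1)).re ≤ q ^ (-1 : ℝ) := by
          apply Real.rpow_le_rpow_of_exponent_le hq.le
          simp only [neg_re, add_re, one_re]
          linarith
      _ = q⁻¹ := Real.rpow_neg_one q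
  have ht0 : (0 : ℝ) ≤ ‖t‖ := norm_nonneg _
  -- the max of the norms
  set M : ℝ := max ‖α₁‖ ‖α₂‖ with hM
  have hM1 : ‖α₁‖ ≤ M := le_max_left _ _
  have hM2 : ‖α₂‖ ≤ M := le_max_right _ _
  have hM0 : 0 ≤ M := le_trans (norm_nonneg _) hM1
  have hMq : M ^ 2 < q := by
    have hMs : M < Real.sqrt q := max_lt h1 h2
    calc M ^ 2 < Real.sqrt q ^ 2 := by gcongr
      _ = q := Real.sq_sqrt hq0.le
  set r : ℝ := M ^ 2 * ‖t‖ with hr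
  have hr0 : 0 ≤ r := mul_nonneg (by positivity) ht0
  have hr1 : r < 1 := by
    calc r ≤ M ^ 2 * q⁻¹ := by rw [hr]; gcongr
      _ < q * q⁻¹ := by gcongr
      _ = 1 := mul_inv_cancel₀ (ne_of_gt hq0)
  -- the series
  set F : ℕ → ℂ := fun m =>
    Asph α₁ α₂ (m + 2) * (starRingEnd ℂ) (Asph α₁ α₂ m) * t ^ m with hFdef
  have hFbound : ∀ m : ℕ, ‖F m‖ ≤ (((m : ℝ) + 3) * ((m : ℝ) + 1) * M ^ 2) * r ^ m := by
    intro m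
    have b1 : ‖Asph α₁ α₂ (m + 2)‖ ≤ ((m : ℝ) + 3) * M ^ (m + 2) := by
      have h := Asph_norm_le α₁ α₂ (m + 2) M hM1 hM2
      push_cast at h
      convert h using 2 <;> push_cast <;> ring
    have b2 : ‖Asph α₁ α₂ m‖ ≤ ((m : ℝ) + 1) * M ^ m := Asph_norm_le α₁ α₂ m M hM1 hM2
    calc ‖F m‖ = ‖Asph α₁ α₂ (m + 2)‖ * ‖Asph α₁ α₂ m‖ * ‖t‖ ^ m := by
          simp only [hFdef, norm_mul, norm_pow, RCLike.norm_conj]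
      _ ≤ (((m : ℝ) + 3) * M ^ (m + 2)) * (((m : ℝ) + 1) * M ^ m) * ‖t‖ ^ m := by
          gcongr
      _ = (((m : ℝ) + 3) * ((m : ℝ) + 1) * M ^ 2) * r ^ m := by
          rw [hr, mul_pow, ← pow_mul]
          ring
  have hbsum : Summable (fun m : ℕ => (((m : ℝ) + 3) * ((m : ℝ) + 1) * M ^ 2) * r ^ m) := by
    have hrn : ‖r‖ < 1 := by rwa [Real.norm_eq_abs, _root_.abs_of_nonneg hr0]
    have s2 : Summable (fun m : ℕ => (m : ℝ) ^ 2 * r ^ m) :=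
      summable_pow_mul_geometric_of_norm_lt_one 2 hrn
    have s1 : Summable (fun m : ℕ => (m : ℝ) ^ 1 * r ^ m) :=
      summable_pow_mul_geometric_of_norm_lt_one 1 hrn
    have s0 : Summable (fun m : ℕ => r ^ m) := summable_geometric_of_lt_one hr0 hr1
    have := ((s2.mul_left (M ^ 2)).add ((s1.mul_left (4 * M ^ 2)).add
      (s0.mul_left (3 * M ^ 2))))
    refine this.congr fun m => ?_
    ring
  have hFnorm : Summable (fun m : ℕ => ‖F m‖) :=
    Summable.of_nonneg_of_le (fun m => norm_nonneg _) hFbound hbsum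
  have hF : Summable F := hFnorm.of_norm
  constructor
  · refine hFnorm.congr fun m => ?_
    simp only [hFdef, hcp]
  -- the main identity
  simp only [hcp, hcp2]
  -- coefficients of the product polynomial
  set c₁ : ℂ := (starRingEnd ℂ) α₁ with hc₁
  set c₂ : ℂ := (starRingEnd ℂ) α₂ with hc₂
  have hp : α₁ * α₂ * (c₁ * c₂) = 1 := by
    rw [hc₁, hc₂, show α₁ * α₂ * ((starRingEnd ℂ) α₁ * (starRingEnd ℂ) α₂)
      = (α₁ * α₂) * (starRingEnd ℂ) (α₁ * α₂) from by rw [map_mul],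
      Complex.mul_conj, Complex.normSq_eq_norm_sq, hmul]
    norm_num
  set d₁ : ℂ := -(α₁ * c₁ + α₁ * c₂ + α₂ * c₁ + α₂ * c₂) with hd₁
  set d₂ : ℂ := (α₁ * c₁) * (α₁ * c₂) + (α₁ * c₁) * (α₂ * c₁) + (α₁ * c₁) * (α₂ * c₂)
    + (α₁ * c₂) * (α₂ * c₁) + (α₁ * c₂) * (α₂ * c₂) + (α₂ * c₁) * (α₂ * c₂) with hd₂
  set d₃ : ℂ := -((α₁ * c₁) * (α₁ * c₂) * (α₂ * c₁) + (α₁ * c₁) * (α₁ * c₂) * (α₂ * c₂)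
    + (α₁ * c₁) * (α₂ * c₁) * (α₂ * c₂) + (α₁ * c₂) * (α₂ * c₁) * (α₂ * c₂)) with hd₃
  set d₄ : ℂ := (α₁ * c₁) * (α₁ * c₂) * (α₂ * c₁) * (α₂ * c₂) with hd₄
  -- the shifted series
  set G : ℕ → ℕ → ℂ := fun k n => if k ≤ n then t ^ k * F (n - k) else 0 with hGdef
  have hG : ∀ k : ℕ, Summable (G k) ∧ ∑' n, G k n = t ^ k * ∑' n, F n := by
    intro k
    induction k with
    | zero =>
      have h0 : G 0 = F := by
        funext n
        simp [hGdef]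
      rw [h0]
      exact ⟨hF, by rw [pow_zero, one_mul]⟩
    | succ k ih =>
      have e1 : ∀ n : ℕ, G (k + 1) (n + 1) = t * G k n := by
        intro n
        simp only [hGdef]
        by_cases h : k ≤ n
        · rw [if_pos (by omega : k + 1 ≤ n + 1), if_pos h,
            show n + 1 - (k + 1) = n - k from by omega, pow_succ]
          ring
        · rw [if_neg (by omega), if_neg h, mul_zero]
      have e0 : G (k + 1) 0 = 0 := by simp only [hGdef]; exact if_neg (by omega)
      have hsucc : Summable (fun n => G (k + 1) (n + 1)) := by
        refine (ih.1.mul_left t).congr fun n => ?_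
        rw [e1]
      have hsm : Summable (G (k + 1)) := (summable_nat_add_iff 1).mp hsucc
      refine ⟨hsm, ?_⟩
      rw [Summable.tsum_eq_zero_add hsm, e0, zero_add]
      calc ∑' n, G (k + 1) (n + 1) = ∑' n, t * G k n := by
            exact tsum_congr e1
        _ = t * ∑' n, G k n := tsum_mul_left
        _ = t * (t ^ k * ∑' n, F n) := by rw [ih.2]
        _ = t ^ (k + 1) * ∑' n, F n := by rw [pow_succ]; ring
  -- the combined series
  set H : ℕ → ℂ := fun n => F n + d₁ * G 1 n + d₂ * G 2 n + d₃ * G 3 n + d₄ * G 4 n with hHdef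
  have hs1 : Summable (fun n => d₁ * G 1 n) := (hG 1).1.mul_left d₁
  have hs2 : Summable (fun n => d₂ * G 2 n) := (hG 2).1.mul_left d₂
  have hs3 : Summable (fun n => d₃ * G 3 n) := (hG 3).1.mul_left d₃
  have hs4 : Summable (fun n => d₄ * G 4 n) := (hG 4).1.mul_left d₄
  have hHt : ∑' n, H n = (1 + d₁ * t + d₂ * t ^ 2 + d₃ * t ^ 3 + d₄ * t ^ 4) * ∑' n, F n := by
    simp only [hHdef]
    rw [Summable.tsum_add (((hF.add hs1).add hs2).add hs3) hs4,
      Summable.tsum_add ((hF.add hs1).add hs2) hs3,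
      Summable.tsum_add (hF.add hs1) hs2, Summable.tsum_add hF hs1,
      tsum_mul_left, tsum_mul_left, tsum_mul_left, tsum_mul_left,
      (hG 1).2, (hG 2).2, (hG 3).2, (hG 4).2]
    ring
  -- vanishing of H for n ≥ 3
  have hvanish : ∀ n ∉ Finset.range 3, H n = 0 := by
    intro n hn
    have hn3 : 3 ≤ n := by simpa [Finset.mem_range] using hn
    rcases Nat.lt_or_ge n 4 with h4 | h4
    · have : n = 3 := by omega
      subst this
      have hA0 : Asph α₁ α₂ 0 = 1 := by simp [Asph]
      have hA1 : Asph α₁ α₂ 1 = α₂ + α₁ := by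
        simp [Asph, Finset.sum_range_succ]
      have hA2 : Asph α₁ α₂ 2 = α₂ ^ 2 + α₁ * α₂ + α₁ ^ 2 := by
        simp [Asph, Finset.sum_range_succ]
      have hA3 : Asph α₁ α₂ 3 = α₂ ^ 3 + α₁ * α₂ ^ 2 + α₁ ^ 2 * α₂ + α₁ ^ 3 := by
        simp [Asph, Finset.sum_range_succ]
      have hA5 : Asph α₁ α₂ 5 = α₂ ^ 5 + α₁ * α₂ ^ 4 + α₁ ^ 2 * α₂ ^ 3 + α₁ ^ 3 * α₂ ^ 2
          + α₁ ^ 4 * α₂ + α₁ ^ 5 := by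
        simp [Asph, Finset.sum_range_succ]
      simp only [hHdef, hGdef]
      simp only [show (1:ℕ) ≤ 3 from by omega, show (2:ℕ) ≤ 3 from by omega,
        show (3:ℕ) ≤ 3 from le_refl 3, if_true, if_neg (by omega : ¬ (4:ℕ) ≤ 3)]
      simp only [hFdef]
      simp only [show 3 - 1 = 2 from rfl, show 3 - 2 = 1 from rfl, show 3 - 3 = 0 from rfl,
        show 3 + 2 = 5 from rfl, show 2 + 2 = 4 from rfl, show 1 + 2 = 3 from rfl,
        show 0 + 2 = 2 from rfl]
      have hA4 : Asph α₁ α₂ 4 = α₂ ^ 4 + α₁ * α₂ ^ 3 + α₁ ^ 2 * α₂ ^ 2 + α₁ ^ 3 * α₂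
          + α₁ ^ 4 := by
        simp [Asph, Finset.sum_range_succ]
      rw [hA0, hA1, hA2, hA3, hA4, hA5]
      simp only [map_add, map_mul, map_pow, map_one, ← hc₁, ← hc₂]
      rw [hd₁, hd₂, hd₃]
      ring
    · obtain ⟨j, rfl⟩ : ∃ j, n = j + 4 := ⟨n - 4, by omega⟩
      simp only [hHdef, hGdef]
      simp only [show (1:ℕ) ≤ j + 4 from by omega, show (2:ℕ) ≤ j + 4 from by omega,
        show (3:ℕ) ≤ j + 4 from by omega, show (4:ℕ) ≤ j + 4 from by omega, if_true,
        show j + 4 - 1 = j + 3 from by omega, show j + 4 - 2 = j + 2 from by omega,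
        show j + 4 - 3 = j + 1 from by omega, show j + 4 - 4 = j from by omega]
      simp only [hFdef]
      simp only [show j + 4 + 2 = j + 6 from by omega, show j + 3 + 2 = j + 5 from by omega,
        show j + 2 + 2 = j + 4 from by omega, show j + 1 + 2 = j + 3 from by omega]
      -- recurrence expansions
      have a2 := Asph_rec α₁ α₂ j
      have a3 := Asph_rec α₁ α₂ (j + 1)
      have a4 := Asph_rec α₁ α₂ (j + 2)
      have a5 := Asph_rec α₁ α₂ (j + 3)
      have a6 := Asph_rec α₁ α₂ (j + 4)
      simp only [show j + 1 + 2 = j + 3 from by omega, show j + 2 + 2 = j + 4 from by omega,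
        show j + 3 + 2 = j + 5 from by omega, show j + 4 + 2 = j + 6 from by omega,
        show j + 1 + 1 = j + 2 from by omega, show j + 2 + 1 = j + 3 from by omega,
        show j + 3 + 1 = j + 4 from by omega, show j + 4 + 1 = j + 5 from by omega]
        at a2 a3 a4 a5 a6
      have c2 : (starRingEnd ℂ) (Asph α₁ α₂ (j + 2))
          = (c₁ + c₂) * (starRingEnd ℂ) (Asph α₁ α₂ (j + 1))
            - c₁ * c₂ * (starRingEnd ℂ) (Asph α₁ α₂ j) := by
        rw [a2]
        simp only [map_sub, map_mul, map_add, ← hc₁, ← hc₂]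
      have c3 : (starRingEnd ℂ) (Asph α₁ α₂ (j + 3))
          = (c₁ + c₂) * (starRingEnd ℂ) (Asph α₁ α₂ (j + 2))
            - c₁ * c₂ * (starRingEnd ℂ) (Asph α₁ α₂ (j + 1)) := by
        rw [a3]
        simp only [map_sub, map_mul, map_add, ← hc₁, ← hc₂]
      have c4 : (starRingEnd ℂ) (Asph α₁ α₂ (j + 4))
          = (c₁ + c₂) * (starRingEnd ℂ) (Asph α₁ α₂ (j + 3))
            - c₁ * c₂ * (starRingEnd ℂ) (Asph α₁ α₂ (j + 2)) := by
        rw [a4]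
        simp only [map_sub, map_mul, map_add, ← hc₁, ← hc₂]
      rw [c4, c3, c2, a6, a5, a4, a3, a2]
      rw [hd₁, hd₂, hd₃, hd₄]
      ring
  have hHsum : ∑' n, H n = H 0 + H 1 + H 2 := by
    rw [tsum_eq_sum hvanish]
    rw [show (3:ℕ) = 2 + 1 from rfl, Finset.sum_range_succ,
      show (2:ℕ) = 1 + 1 from rfl, Finset.sum_range_succ, Finset.sum_range_one]
  -- compute H 0, H 1, H 2
  have hA0 : Asph α₁ α₂ 0 = 1 := by simp [Asph]
  have hA1 : Asph α₁ α₂ 1 = α₂ + α₁ := by simp [Asph, Finset.sum_range_succ]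
  have hA2 : Asph α₁ α₂ 2 = α₂ ^ 2 + α₁ * α₂ + α₁ ^ 2 := by
    simp [Asph, Finset.sum_range_succ]
  have hA3 : Asph α₁ α₂ 3 = α₂ ^ 3 + α₁ * α₂ ^ 2 + α₁ ^ 2 * α₂ + α₁ ^ 3 := by
    simp [Asph, Finset.sum_range_succ]
  have hA4 : Asph α₁ α₂ 4 = α₂ ^ 4 + α₁ * α₂ ^ 3 + α₁ ^ 2 * α₂ ^ 2 + α₁ ^ 3 * α₂ + α₁ ^ 4 := by
    simp [Asph, Finset.sum_range_succ]
  have hH0 : H 0 = F 0 := by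
    simp only [hHdef, hGdef]
    simp
  have hH1 : H 1 = F 1 + d₁ * (t * F 0) := by
    simp only [hHdef, hGdef]
    norm_num
  have hH2 : H 2 = F 2 + d₁ * (t * F 1) + d₂ * (t ^ 2 * F 0) := by
    simp only [hHdef, hGdef]
    norm_num
  -- put it together
  calc ((1 - α₁ * c₁ * t) * (1 - α₁ * c₂ * t) * (1 - α₂ * c₁ * t) * (1 - α₂ * c₂ * t))
        * ∑' n, F n
      = (1 + d₁ * t + d₂ * t ^ 2 + d₃ * t ^ 3 + d₄ * t ^ 4) * ∑' n, F n := by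
        rw [hd₁, hd₂, hd₃, hd₄]; ring
    _ = ∑' n, H n := hHt.symm
    _ = H 0 + H 1 + H 2 := hHsum
    _ = (α₁ + α₂) ^ 2 - α₁ * α₂ - α₁ * α₂ * ((α₁ + α₂) * (starRingEnd ℂ) (α₁ + α₂)) * t
        + α₁ * α₂ * t ^ 2 := by
        rw [hH0, hH1, hH2]
        simp only [hFdef]
        simp only [pow_zero, mul_one, show (0:ℕ) + 2 = 2 from rfl,
          show (1:ℕ) + 2 = 3 from rfl, show (2:ℕ) + 2 = 4 from rfl]
        rw [hA0, hA1, hA2, hA3, hA4]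
        simp only [map_add, map_mul, map_pow, map_one, ← hc₁, ← hc₂]
        rw [hd₁, hd₂]
        linear_combination (α₁ * α₂ * t ^ 2) * hp
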